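/- Let λ ∈ ℂ with λ ∉ {0, q²}. Suppose (Γ, d) is a first order differential calculus on X satisfying θ₊ + λ θ₋ = 0 and, for all k, l ∈ {1, …, N}: dz_k·z_l = qλ⁻¹ Σ_{a,b} (R⁻¹)^{ab}_{kl} z_a·dz_b + (q²λ⁻¹−1) z_k·dz_l + q²λ⁻¹(λ⁻¹−1) z_k z_l·θ₊; dz*_k·z*_l = q⁻¹λ Σ_{a,b} R̄^{ab}_{kl} z*_a·dz*_b + (q⁻²λ−1) z*_k·dz*_l − (λ−1) z*_k z*_l·θ₊; dz_k·z*_l = q⁻¹λ Σ_{a,b} (R←⁻¹)^{ab}_{kl} z*_a·dz_b + (q²λ⁻¹−1) z_k·dz*_l − (q²λ⁻¹−1) z_k z*_l·θ₊; dz*_k·z_l = qλ⁻¹ Σ_{a,b} (R→)^{ab}_{kl} z_a·dz*_b + (q⁻²λ−1) z*_k·dz_l − (q²λ⁻¹−1) z*_k z_l·θ₊. Set θ := (q⁻²λ−1)⁻¹ θ₊. Then the calculus is inner: for every x ∈ X, dx = θ·x − x·θ. -/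

import Mathlib

noncomputable section

open scoped BigOperators

namespace QSphere

/-- Generator index set: `Sum.inl i` stands for `z_{i+1}`, `Sum.inr i` for `z*_{i+1}`. -/
abbrev GenIdx (N : ℕ) := Fin N ⊕ Fin N

/-- The free unital `ℂ`-algebra on the `2N` generators. -/
abbrev FA (N : ℕ) := FreeAlgebra ℂ (GenIdx N)

/-- The generator `z_{i+1}` of the free algebra. -/
def zf {N : ℕ} (i : Fin N) : FA N := FreeAlgebra.ι ℂ (Sum.inl i)

/-- The generator `z*_{i+1}` of the free algebra. -/
def zsf {N : ℕ} (i : Fin N) : FA N := FreeAlgebra.ι ℂ (Sum.inr i)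

/-- `q` viewed as a complex number. -/
def qc (q : ℝ) : ℂ := (q : ℂ)

/-- `Q = q - q⁻¹` as a complex number. -/
def Qc (q : ℝ) : ℂ := qc q - (qc q)⁻¹

/-- The (1-based) integer index of `i : Fin N`. -/
def exZ {N : ℕ} (i : Fin N) : ℤ := (i : ℕ) + 1

/-- The defining relations of the quantum sphere `S_q^{2N-1}`:
the two-sided ideal generated by the listed elements is divided out. -/
inductive SphereRel (N : ℕ) (q : ℝ) : FA N → FA N → Prop
  | zz {i j : Fin N} (h : i < j) :
      SphereRel N q (zf i * zf j) (qc q • (zf j * zf i))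
  | ss {i j : Fin N} (h : i < j) :
      SphereRel N q (zsf i * zsf j) ((qc q)⁻¹ • (zsf j * zsf i))
  | zs {i j : Fin N} (h : i ≠ j) :
      SphereRel N q (zf i * zsf j) (qc q • (zsf j * zf i))
  | qcomm (i : Fin N) :
      SphereRel N q
        (zf i * zsf i - zsf i * zf i
          + ((qc q)⁻¹ * Qc q) • ∑ k ∈ Finset.univ.filter (fun k => i < k), zf k * zsf k)
        0
  | sphere : SphereRel N q (∑ i, zf i * zsf i) 1

/-- The quantum sphere `S_q^{2N-1}`. -/
abbrev X (N : ℕ) (q : ℝ) := RingQuot (SphereRel N q)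

/-- The generator `z_{i+1}` of the quantum sphere. -/
def Z (N : ℕ) (q : ℝ) (i : Fin N) : X N q := RingQuot.mkAlgHom ℂ (SphereRel N q) (zf i)

/-- The generator `z*_{i+1}` of the quantum sphere. -/
def Zs (N : ℕ) (q : ℝ) (i : Fin N) : X N q := RingQuot.mkAlgHom ℂ (SphereRel N q) (zsf i)

/-- The R-matrix coefficient `R^{ij}_{kl}`. -/
def Rm (q : ℝ) {N : ℕ} (i j k l : Fin N) : ℂ :=
  if i = l ∧ j = k ∧ i ≠ j then 1
  else if i = j ∧ j = k ∧ k = l then qc q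
  else if i = k ∧ j = l ∧ i < j then Qc q
  else 0

/-- The inverse R-matrix coefficient `(R⁻¹)^{ij}_{kl}`. -/
def Rinv (q : ℝ) {N : ℕ} (i j k l : Fin N) : ℂ :=
  if i = l ∧ j = k ∧ i ≠ j then 1
  else if i = j ∧ j = k ∧ k = l then (qc q)⁻¹
  else if i = k ∧ j = l ∧ j < i then -(Qc q)
  else 0

/-- `R̄^{ij}_{kl} = R^{lk}_{ji}`. -/
def Rbar (q : ℝ) {N : ℕ} (i j k l : Fin N) : ℂ := Rm q l k j i

/-- `(R̄⁻¹)^{ij}_{kl} = (R⁻¹)^{lk}_{ji}`. -/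
def Rbarinv (q : ℝ) {N : ℕ} (i j k l : Fin N) : ℂ := Rinv q l k j i

/-- `(R→)^{ij}_{kl} = R^{ki}_{lj}`. -/
def Rright (q : ℝ) {N : ℕ} (i j k l : Fin N) : ℂ := Rm q k i l j

/-- `(R←⁻¹)^{ij}_{kl} = q^{2l-2i} (R⁻¹)^{jl}_{ik}`. -/
def Rlinv (q : ℝ) {N : ℕ} (i j k l : Fin N) : ℂ :=
  qc q ^ (2 * exZ l - 2 * exZ i) * Rinv q j l i k

/-- `s = Σ_{i=0}^{N-1} q^{2i}`. -/
def sP (N : ℕ) (q : ℝ) : ℂ := ∑ i ∈ Finset.range N, qc q ^ (2 * i)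

/-- `s̃ = Σ_{i=1}^{N-1} q^{2i}`. -/
def sT (N : ℕ) (q : ℝ) : ℂ := ∑ i ∈ Finset.Ico 1 N, qc q ^ (2 * i)

/-- Kronecker delta. -/
def kdelta {N : ℕ} (k l : Fin N) : ℂ := if k = l then 1 else 0


/-- The data of a candidate first order differential calculus on the quantum
sphere: an `X`-bimodule `Γ` (axioms are stated separately in `IsFODC`)
together with a differential map `d`. -/
structure PreCalc (N : ℕ) (q : ℝ) where
  Γ : Type
  [instAdd : AddCommGroup Γ]
  [instMod : Module ℂ Γ]
  lact : X N q → Γ → Γ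
  ract : Γ → X N q → Γ
  d : X N q → Γ

attribute [instance] PreCalc.instAdd PreCalc.instMod

namespace PreCalc

variable {N : ℕ} {q : ℝ}

/-- `(Γ, d)` is a first order differential calculus on `X = S_q^{2N-1}`:
`Γ` is an `X`-bimodule (left and right module structures commuting with each
other and compatible with the `ℂ`-scalar multiplication), `d` is `ℂ`-linear
and satisfies the Leibniz rule. -/
def IsFODC (D : PreCalc N q) : Prop :=
  (∀ (x : X N q) (ω η : D.Γ), D.lact x (ω + η) = D.lact x ω + D.lact x η) ∧
  (∀ (x y : X N q) (ω : D.Γ), D.lact (x + y) ω = D.lact x ω + D.lact y ω) ∧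
  (∀ (x y : X N q) (ω : D.Γ), D.lact (x * y) ω = D.lact x (D.lact y ω)) ∧
  (∀ ω : D.Γ, D.lact 1 ω = ω) ∧
  (∀ (c : ℂ) (x : X N q) (ω : D.Γ), D.lact (c • x) ω = c • D.lact x ω) ∧
  (∀ (c : ℂ) (x : X N q) (ω : D.Γ), D.lact x (c • ω) = c • D.lact x ω) ∧
  (∀ (ω η : D.Γ) (x : X N q), D.ract (ω + η) x = D.ract ω x + D.ract η x) ∧
  (∀ (ω : D.Γ) (x y : X N q), D.ract ω (x + y) = D.ract ω x + D.ract ω y) ∧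
  (∀ (ω : D.Γ) (x y : X N q), D.ract ω (x * y) = D.ract (D.ract ω x) y) ∧
  (∀ ω : D.Γ, D.ract ω 1 = ω) ∧
  (∀ (c : ℂ) (ω : D.Γ) (x : X N q), D.ract (c • ω) x = c • D.ract ω x) ∧
  (∀ (c : ℂ) (ω : D.Γ) (x : X N q), D.ract ω (c • x) = c • D.ract ω x) ∧
  (∀ (x : X N q) (ω : D.Γ) (y : X N q), D.ract (D.lact x ω) y = D.lact x (D.ract ω y)) ∧
  (∀ x y : X N q, D.d (x + y) = D.d x + D.d y) ∧
  (∀ (c : ℂ) (x : X N q), D.d (c • x) = c • D.d x) ∧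
  (∀ x y : X N q, D.d (x * y) = D.ract (D.d x) y + D.lact x (D.d y))

/-- `dz_i`. -/
def dz (D : PreCalc N q) (i : Fin N) : D.Γ := D.d (Z N q i)

/-- `dz*_i`. -/
def dzs (D : PreCalc N q) (i : Fin N) : D.Γ := D.d (Zs N q i)

/-- The invariant one-form `θ₊ = Σ_i z_i·dz*_i`. -/
def thP (D : PreCalc N q) : D.Γ := ∑ i, D.lact (Z N q i) (D.dzs i)

/-- The invariant one-form `θ₋ = Σ_i q^{-2i} z*_i·dz_i`. -/
def thM (D : PreCalc N q) : D.Γ :=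
  ∑ i, (qc q ^ (-(2 * exZ i))) • D.lact (Zs N q i) (D.dz i)

/-- `Σ_{a,b} (R⁻¹)^{ab}_{kl} z_a·dz_b`. -/
def SRinv (D : PreCalc N q) (k l : Fin N) : D.Γ :=
  ∑ a, ∑ b, Rinv q a b k l • D.lact (Z N q a) (D.dz b)

/-- `Σ_{a,b} R̄^{ab}_{kl} z*_a·dz*_b`. -/
def SRbar (D : PreCalc N q) (k l : Fin N) : D.Γ :=
  ∑ a, ∑ b, Rbar q a b k l • D.lact (Zs N q a) (D.dzs b)

/-- `Σ_{a,b} (R←⁻¹)^{ab}_{kl} z*_a·dz_b`. -/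
def SRlinv (D : PreCalc N q) (k l : Fin N) : D.Γ :=
  ∑ a, ∑ b, Rlinv q a b k l • D.lact (Zs N q a) (D.dz b)

/-- `Σ_{a,b} (R→)^{ab}_{kl} z_a·dz*_b`. -/
def SRright (D : PreCalc N q) (k l : Fin N) : D.Γ :=
  ∑ a, ∑ b, Rright q a b k l • D.lact (Z N q a) (D.dzs b)

/-- `z_k·dz_l`. -/
def lzdz (D : PreCalc N q) (k l : Fin N) : D.Γ := D.lact (Z N q k) (D.dz l)
/-- `z*_k·dz*_l`. -/
def lzsdzs (D : PreCalc N q) (k l : Fin N) : D.Γ := D.lact (Zs N q k) (D.dzs l)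
/-- `z_k·dz*_l`. -/
def lzdzs (D : PreCalc N q) (k l : Fin N) : D.Γ := D.lact (Z N q k) (D.dzs l)
/-- `z*_k·dz_l`. -/
def lzsdz (D : PreCalc N q) (k l : Fin N) : D.Γ := D.lact (Zs N q k) (D.dz l)

/-- `z_k z_l·θ₊`. -/
def zzP (D : PreCalc N q) (k l : Fin N) : D.Γ := D.lact (Z N q k * Z N q l) D.thP
/-- `z_k z_l·θ₋`. -/
def zzM (D : PreCalc N q) (k l : Fin N) : D.Γ := D.lact (Z N q k * Z N q l) D.thM
/-- `z*_k z*_l·θ₊`. -/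
def zszsP (D : PreCalc N q) (k l : Fin N) : D.Γ := D.lact (Zs N q k * Zs N q l) D.thP
/-- `z*_k z*_l·θ₋`. -/
def zszsM (D : PreCalc N q) (k l : Fin N) : D.Γ := D.lact (Zs N q k * Zs N q l) D.thM
/-- `z_k z*_l·θ₊`. -/
def zzsP (D : PreCalc N q) (k l : Fin N) : D.Γ := D.lact (Z N q k * Zs N q l) D.thP
/-- `z_k z*_l·θ₋`. -/
def zzsM (D : PreCalc N q) (k l : Fin N) : D.Γ := D.lact (Z N q k * Zs N q l) D.thM
/-- `z*_k z_l·θ₊`. -/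
def zszP (D : PreCalc N q) (k l : Fin N) : D.Γ := D.lact (Zs N q k * Z N q l) D.thP
/-- `z*_k z_l·θ₋`. -/
def zszM (D : PreCalc N q) (k l : Fin N) : D.Γ := D.lact (Zs N q k * Z N q l) D.thM

/-- `dz_1,…,dz_N,dz*_1,…,dz*_N` form a free basis of `Γ` as a left `X`-module. -/
def FreeBasis (D : PreCalc N q) : Prop :=
  (∀ ω : D.Γ, ∃ a b : Fin N → X N q,
      ω = ∑ i, D.lact (a i) (D.dz i) + ∑ i, D.lact (b i) (D.dzs i)) ∧
  (∀ a b : Fin N → X N q,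
      ∑ i, D.lact (a i) (D.dz i) + ∑ i, D.lact (b i) (D.dzs i) = 0 →
      ∀ i, a i = 0 ∧ b i = 0)

/-- The relation `θ₊ + λ θ₋ = 0` holds in `Γ`. -/
def RelHolds (D : PreCalc N q) (lam : ℂ) : Prop := D.thP + lam • D.thM = 0

/-- `dz_1,…,dz*_N` generate `Γ` as a left `X`-module and all left-module
relations between them are exactly the ones generated by `θ₊ + λ θ₋ = 0`. -/
def GenRel (D : PreCalc N q) (lam : ℂ) : Prop :=
  (∀ ω : D.Γ, ∃ a b : Fin N → X N q,
      ω = ∑ i, D.lact (a i) (D.dz i) + ∑ i, D.lact (b i) (D.dzs i)) ∧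
  (∀ a b : Fin N → X N q,
      (∑ i, D.lact (a i) (D.dz i) + ∑ i, D.lact (b i) (D.dzs i) = 0 ↔
        ∃ c : X N q, ∀ i, a i = (lam * qc q ^ (-(2 * exZ i))) • (c * Zs N q i)
          ∧ b i = c * Z N q i)) ∧
  D.RelHolds lam

/-- The one-form `μ θ₊ + λ θ₋`. -/
def theta0 (D : PreCalc N q) (mu lam : ℂ) : D.Γ := mu • D.thP + lam • D.thM

/-- `c • ω` (scalar multiple of a one-form). -/
def smulG (D : PreCalc N q) (c : ℂ) (ω : D.Γ) : D.Γ := c • ω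

/-- The one-form `θ₀` quasi-commutes with all generators of `X`. -/
def QuasiComm (D : PreCalc N q) (θ₀ : D.Γ) : Prop :=
  ∀ m : Fin N, ∃ c c' : ℂ,
    D.ract θ₀ (Z N q m) = c • D.lact (Z N q m) θ₀ ∧
    D.ract θ₀ (Zs N q m) = c' • D.lact (Zs N q m) θ₀

/-- The calculus is inner with generating one-form `θ`. -/
def Inner (D : PreCalc N q) (θ : D.Γ) : Prop :=
  ∀ x : X N q, D.d x = D.ract θ x - D.lact x θ

/-- Structure equations of the calculus `Γ_{ατ}`. -/
def EqAT (D : PreCalc N q) (α τ : ℝ) : Prop :=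
  ∀ k l : Fin N,
    D.ract (D.dz k) (Z N q l) =
        (qc q * (α:ℂ)) • D.SRinv k l
        + (qc q ^ 2 * (α:ℂ) - 1) • D.lzdz k l
        + (qc q ^ 2 * (α:ℂ) ^ 2 * (1 - sT N q * (τ:ℂ))) • D.zzP k l
        + (qc q ^ 2 * (1 - (α:ℂ) * sT N q * (τ:ℂ))) • D.zzM k l
    ∧ D.ract (D.dzs k) (Zs N q l) =
        ((qc q)⁻¹ * (α:ℂ)⁻¹) • D.SRbar k l
        + (qc q ^ (-2:ℤ) * (α:ℂ)⁻¹ - 1) • D.lzsdzs k l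
        + (1 - sT N q * (τ:ℂ)) • D.zszsP k l
        + ((α:ℂ)⁻¹ ^ 2 * (1 - (α:ℂ) * sT N q * (τ:ℂ))) • D.zszsM k l
    ∧ D.ract (D.dz k) (Zs N q l) =
        ((qc q)⁻¹ * (α:ℂ)⁻¹) • D.SRlinv k l
        + (qc q ^ 2 * (α:ℂ) - 1) • D.lzdzs k l
        - (qc q ^ 2 * (α:ℂ) * (1 - sP N q * (τ:ℂ))) • D.zzsP k l
        - ((α:ℂ) * (τ:ℂ) * qc q ^ (2 * exZ k) * kdelta k l) • D.thP
        - ((α:ℂ)⁻¹ * (1 - qc q ^ 2 * (α:ℂ) * sP N q * (τ:ℂ))) • D.zzsM k l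
        - ((τ:ℂ) * qc q ^ (2 * exZ k) * kdelta k l) • D.thM
    ∧ D.ract (D.dzs k) (Z N q l) =
        (qc q * (α:ℂ)) • D.SRright k l
        + (qc q ^ (-2:ℤ) * (α:ℂ)⁻¹ - 1) • D.lzsdz k l
        - (qc q ^ 2 * (α:ℂ) * (1 - sP N q * (τ:ℂ))) • D.zszP k l
        - ((α:ℂ) * (τ:ℂ) * kdelta k l) • D.thP
        - ((α:ℂ)⁻¹ * (1 - qc q ^ 2 * (α:ℂ) * sP N q * (τ:ℂ))) • D.zszM k l
        - ((τ:ℂ) * kdelta k l) • D.thM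

/-- Structure equations of the calculus `Γ'_{αω}`. -/
def EqAP (D : PreCalc N q) (α ω : ℝ) : Prop :=
  ∀ k l : Fin N,
    D.ract (D.dz k) (Z N q l) =
        (qc q * (α:ℂ)) • D.SRinv k l
        + (qc q ^ 2 * (α:ℂ) - 1) • D.lzdz k l
        + (ω:ℂ) • D.zzP k l
        + ((α:ℂ)⁻¹ * (ω:ℂ) - qc q ^ 2 * ((α:ℂ) - 1)) • D.zzM k l
    ∧ D.ract (D.dzs k) (Zs N q l) =
        ((qc q)⁻¹ * (α:ℂ)⁻¹) • D.SRbar k l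
        + (qc q ^ (-2:ℤ) * (α:ℂ)⁻¹ - 1) • D.lzsdzs k l
        + (qc q ^ 2 * (α:ℂ) * (ω:ℂ)⁻¹ - ((α:ℂ)⁻¹ - 1)) • D.zszsP k l
        + (qc q ^ 2 * (ω:ℂ)⁻¹) • D.zszsM k l
    ∧ D.ract (D.dz k) (Zs N q l) =
        ((qc q)⁻¹ * (α:ℂ)⁻¹) • D.SRlinv k l
        + (qc q ^ 2 * (α:ℂ) - 1) • D.lzdzs k l
        - (qc q ^ 2 * (α:ℂ)) • D.zzsP k l
        - (α:ℂ)⁻¹ • D.zzsM k l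
    ∧ D.ract (D.dzs k) (Z N q l) =
        (qc q * (α:ℂ)) • D.SRright k l
        + (qc q ^ (-2:ℤ) * (α:ℂ)⁻¹ - 1) • D.lzsdz k l
        - (qc q ^ 2 * (α:ℂ)) • D.zszP k l
        - (α:ℂ)⁻¹ • D.zszM k l

/-- Structure equations of the calculus `Γ''_{ωψ}`. -/
def EqPP (D : PreCalc N q) (ω ψ : ℝ) : Prop :=
  ∀ k l : Fin N,
    D.ract (D.dz k) (Z N q l) =
        (qc q)⁻¹ • D.SRinv k l
        + (ω:ℂ) • D.zzP k l
        + (qc q ^ 2 * (ω:ℂ) * (ψ:ℂ) - 1) • D.zzM k l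
    ∧ D.ract (D.dzs k) (Zs N q l) =
        qc q • D.SRbar k l
        + ((ψ:ℂ) - qc q ^ 2) • D.zszsP k l
        + (qc q ^ 2 * (ω:ℂ)⁻¹) • D.zszsM k l
    ∧ D.ract (D.dz k) (Zs N q l) =
        qc q • D.SRlinv k l
        - D.zzsP k l
        - (qc q ^ 2:ℂ) • D.zzsM k l
    ∧ D.ract (D.dzs k) (Z N q l) =
        (qc q)⁻¹ • D.SRright k l
        - D.zszP k l
        - (qc q ^ 2:ℂ) • D.zszM k l

/-- Structure equations of the calculus `Γ'''_{ρτ}`. -/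
def EqPPP (D : PreCalc N q) (ρ τ : ℝ) : Prop :=
  ∀ k l : Fin N,
    D.ract (D.dz k) (Z N q l) =
        (qc q)⁻¹ • D.SRinv k l
        - (qc q ^ (-2:ℤ) * ((ρ:ℂ) / (τ:ℂ)) * (sT N q * (ρ:ℂ) - 1)) • D.zzP k l
        - (((ρ:ℂ) / (τ:ℂ)) * (sT N q * (τ:ℂ) - qc q ^ 2)) • D.zzM k l
    ∧ D.ract (D.dzs k) (Zs N q l) =
        qc q • D.SRbar k l
        - (((τ:ℂ) / (ρ:ℂ)) * (sT N q * (ρ:ℂ) - 1)) • D.zszsP k l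
        - (qc q ^ 2 * ((τ:ℂ) / (ρ:ℂ)) * (sT N q * (τ:ℂ) - qc q ^ 2)) • D.zszsM k l
    ∧ D.ract (D.dz k) (Zs N q l) =
        qc q • D.SRlinv k l
        - (qc q ^ (-2:ℤ) * (ρ:ℂ) * qc q ^ (2 * exZ k) * kdelta k l) • D.thP
        - ((τ:ℂ) * qc q ^ (2 * exZ k) * kdelta k l) • D.thM
        + (sP N q * (ρ:ℂ) - 1) • D.zzsP k l
        + (qc q ^ 2 * (sP N q * (τ:ℂ) - 1)) • D.zzsM k l
    ∧ D.ract (D.dzs k) (Z N q l) =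
        (qc q)⁻¹ • D.SRright k l
        - (qc q ^ (2 * (N:ℤ) - 2) * (ρ:ℂ) * kdelta k l) • D.thP
        - (qc q ^ (2 * (N:ℤ)) * (τ:ℂ) * kdelta k l) • D.thM
        + (sP N q * (ρ:ℂ) - 1) • D.zszP k l
        + (qc q ^ 2 * (sP N q * (τ:ℂ) - 1)) • D.zszM k l

/-- Structure equations of the calculus `Γ̃_λ`. -/
def EqTl (D : PreCalc N q) (lam : ℂ) : Prop :=
  ∀ k l : Fin N,
    D.ract (D.dz k) (Z N q l) =
        (qc q * lam⁻¹) • D.SRinv k l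
        + (qc q ^ 2 * lam⁻¹ - 1) • D.lzdz k l
        + (qc q ^ 2 * lam⁻¹ * (lam⁻¹ - 1)) • D.zzP k l
    ∧ D.ract (D.dzs k) (Zs N q l) =
        ((qc q)⁻¹ * lam) • D.SRbar k l
        + (qc q ^ (-2:ℤ) * lam - 1) • D.lzsdzs k l
        - (lam - 1) • D.zszsP k l
    ∧ D.ract (D.dz k) (Zs N q l) =
        ((qc q)⁻¹ * lam) • D.SRlinv k l
        + (qc q ^ 2 * lam⁻¹ - 1) • D.lzdzs k l
        - (qc q ^ 2 * lam⁻¹ - 1) • D.zzsP k l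
    ∧ D.ract (D.dzs k) (Z N q l) =
        (qc q * lam⁻¹) • D.SRright k l
        + (qc q ^ (-2:ℤ) * lam - 1) • D.lzsdz k l
        - (qc q ^ 2 * lam⁻¹ - 1) • D.zszP k l

/-- Structure equations of the calculus `Γ̃'_λ`. -/
def EqTp (D : PreCalc N q) (lam : ℂ) : Prop :=
  ∀ k l : Fin N,
    D.ract (D.dz k) (Z N q l) =
        (qc q)⁻¹ • D.SRinv k l
        - (lam⁻¹ * (qc q ^ 4 * lam⁻¹ - 1)) • D.zzP k l
    ∧ D.ract (D.dzs k) (Zs N q l) =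
        qc q • D.SRbar k l
        - (qc q ^ (-2:ℤ) * lam * (qc q ^ 4 * lam⁻¹ - 1)) • D.zszsP k l
    ∧ D.ract (D.dz k) (Zs N q l) =
        qc q • D.SRlinv k l
        + (qc q ^ 2 * lam⁻¹ - 1) • D.zzsP k l
    ∧ D.ract (D.dzs k) (Z N q l) =
        (qc q)⁻¹ • D.SRright k l
        + (qc q ^ 2 * lam⁻¹ - 1) • D.zszP k l

/-- Structure equations of the calculus `Γ̃''_λ` (for `λ ∉ {0,∞}`). -/
def EqTpp (D : PreCalc N q) (lam : ℂ) : Prop :=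
  ∀ k l : Fin N,
    D.ract (D.dz k) (Z N q l) = (qc q)⁻¹ • D.SRinv k l
    ∧ D.ract (D.dzs k) (Zs N q l) = qc q • D.SRbar k l
    ∧ D.ract (D.dz k) (Zs N q l) =
        qc q • D.SRlinv k l
        + (qc q ^ (-2:ℤ) * (sT N q)⁻¹ * (qc q ^ 4 * lam⁻¹ - 1)
            * qc q ^ (2 * exZ k) * kdelta k l) • D.thP
        - ((sT N q)⁻¹ * (qc q ^ (2 * (N:ℤ) + 2) * lam⁻¹ - 1)) • D.zzsP k l
    ∧ D.ract (D.dzs k) (Z N q l) =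
        (qc q)⁻¹ • D.SRright k l
        + (qc q ^ (-2:ℤ) * (sT N q)⁻¹ * (qc q ^ 4 * lam⁻¹ - 1) * kdelta k l) • D.thP
        - ((sT N q)⁻¹ * (qc q ^ (2 * (N:ℤ) + 2) * lam⁻¹ - 1)) • D.zszP k l

/-- Structure equations of the calculus `Γ̃°_λ`. -/
def EqTo (D : PreCalc N q) (lam : ℂ) : Prop :=
  ∀ k l : Fin N,
    D.ract (D.dz k) (Z N q l) =
        (qc q * lam⁻¹) • D.SRinv k l
        + (qc q ^ 2 * lam⁻¹ - 1) • D.lzdz k l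
        + (qc q ^ 2 * lam⁻¹ * (lam⁻¹ - 1)) • D.zzP k l
    ∧ D.ract (D.dzs k) (Zs N q l) =
        qc q • D.SRbar k l
        - (qc q ^ (-2:ℤ) * lam * (qc q ^ 4 * lam⁻¹ - 1)) • D.zszsP k l
    ∧ D.ract (D.dz k) (Zs N q l) = ((qc q)⁻¹ * lam) • D.SRlinv k l
    ∧ D.ract (D.dzs k) (Z N q l) =
        (qc q)⁻¹ • D.SRright k l
        + (qc q ^ (-2:ℤ) * lam - 1) • D.lzsdz k l

/-- Structure equations of the calculus `Γ̃°°_λ`. -/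
def EqToo (D : PreCalc N q) (lam : ℂ) : Prop :=
  ∀ k l : Fin N,
    D.ract (D.dz k) (Z N q l) =
        (qc q)⁻¹ • D.SRinv k l
        - (lam⁻¹ * (qc q ^ 4 * lam⁻¹ - 1)) • D.zzP k l
    ∧ D.ract (D.dzs k) (Zs N q l) =
        ((qc q)⁻¹ * lam) • D.SRbar k l
        + (qc q ^ (-2:ℤ) * lam - 1) • D.lzsdzs k l
        - (lam - 1) • D.zszsP k l
    ∧ D.ract (D.dz k) (Zs N q l) =
        qc q • D.SRlinv k l
        + (qc q ^ 2 * lam⁻¹ - 1) • D.lzdzs k l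
    ∧ D.ract (D.dzs k) (Z N q l) = (qc q * lam⁻¹) • D.SRright k l

end PreCalc
variable {N : ℕ} {q : ℝ}

lemma X_sphere : (∑ i, Z N q i * Zs N q i) = (1 : X N q) := by
  have h := RingQuot.mkAlgHom_rel ℂ (SphereRel.sphere (N:=N) (q:=q))
  simpa [Z, Zs, map_sum, map_mul, map_one] using h

lemma X_zz {i j : Fin N} (h : i < j) :
    Z N q i * Z N q j = qc q • (Z N q j * Z N q i) := by
  have h2 := RingQuot.mkAlgHom_rel ℂ (SphereRel.zz (q:=q) h)
  simpa [Z, map_mul, map_smul] using h2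

lemma X_zs {i j : Fin N} (h : i ≠ j) :
    Z N q i * Zs N q j = qc q • (Zs N q j * Z N q i) := by
  have h2 := RingQuot.mkAlgHom_rel ℂ (SphereRel.zs (q:=q) h)
  simpa [Z, Zs, map_mul, map_smul] using h2

lemma X_qcomm (i : Fin N) :
    Z N q i * Zs N q i - Zs N q i * Z N q i
      + ((qc q)⁻¹ * Qc q) • ∑ k ∈ Finset.univ.filter (fun k => i < k), Z N q k * Zs N q k
    = 0 := by
  have h2 := RingQuot.mkAlgHom_rel ℂ (SphereRel.qcomm (q:=q) i)
  simpa [Z, Zs, map_sum, map_mul, map_smul, map_sub, map_add] using h2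

lemma qcne (hq0 : q ≠ 0) : qc q ≠ 0 := by
  simpa [qc] using Complex.ofReal_ne_zero.mpr hq0

lemma qcQc (hq0 : q ≠ 0) : 1 + Qc q * qc q = qc q * qc q := by
  have h : qc q ≠ 0 := qcne hq0
  field_simp [Qc]
  rw [Qc, sub_mul, inv_mul_cancel₀ h]
  ring

lemma sumRm_zz (hq0 : q ≠ 0) (m b : Fin N) :
    (∑ i : Fin N, ∑ a : Fin N, Rm q i a m b • (Z N q i * Z N q a))
      = qc q • (Z N q m * Z N q b) := by
  rcases lt_trichotomy m b with hmb | rfl | hbm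
  · have hRm : ∀ i a : Fin N, Rm q i a m b • (Z N q i * Z N q a)
        = (if a = m then (if i = b then (Z N q b * Z N q m) else 0) else 0)
          + (if a = b then (if i = m then Qc q • (Z N q m * Z N q b) else 0) else 0) := by
      intro i a
      by_cases ha : a = m <;> by_cases hi : i = b <;> by_cases him : i = m <;>
        by_cases hab : a = b <;>
        simp_all [Rm, hmb.ne, hmb.ne', hmb, lt_irrefl, le_of_lt]
    simp only [hRm, Finset.sum_add_distrib, Finset.sum_ite_eq', Finset.mem_univ, if_true]
    rw [X_zz hmb]
    match_scalars
    linear_combination (qcQc (q := q) hq0)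
  · have hRm : ∀ i a : Fin N, Rm q i a m m • (Z N q i * Z N q a)
        = (if a = m then (if i = m then qc q • (Z N q m * Z N q m) else 0) else 0) := by
      intro i a
      by_cases ha : a = m <;> by_cases him : i = m <;>
        simp_all [Rm, lt_irrefl]
    simp only [hRm, Finset.sum_ite_eq', Finset.mem_univ, if_true]
  · have hRm : ∀ i a : Fin N, Rm q i a m b • (Z N q i * Z N q a)
        = (if a = m then (if i = b then (Z N q b * Z N q m) else 0) else 0) := by
      intro i a
      by_cases ha : a = m <;> by_cases hi : i = b <;> by_cases him : i = m <;>
        by_cases hab : a = b <;>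
        simp_all [Rm, hbm.ne, hbm.ne', hbm.not_gt, lt_irrefl, lt_asymm hbm]
    simp only [hRm, Finset.sum_ite_eq', Finset.mem_univ, if_true]
    rw [X_zz hbm]

set_option maxHeartbeats 1600000 in
lemma sumRm_zzs (hq0 : q ≠ 0) (m b : Fin N) :
    (∑ i : Fin N, ∑ a : Fin N, Rm q m i b a • (Z N q i * Zs N q a))
      = qc q • (Zs N q m * Z N q b) := by
  rcases eq_or_ne b m with rfl | hbm
  · have hRm : ∀ i a : Fin N, Rm q b i b a • (Z N q i * Zs N q a)
        = (if a = b then (if i = b then qc q • (Z N q b * Zs N q b) else 0) else 0)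
          + (if a = i then (if b < i then Qc q • (Z N q i * Zs N q i) else 0) else 0) := by
      intro i a
      by_cases ha : a = b <;> by_cases hi : i = b <;> by_cases hai : a = i <;>
        by_cases hlt : b < i <;>
        simp_all [Rm, lt_irrefl, ne_of_gt, ne_of_lt, eq_comm]
    simp only [hRm, Finset.sum_add_distrib, Finset.sum_ite_eq', Finset.mem_univ, if_true]
    rw [← Finset.sum_filter]
    have h := X_qcomm (N := N) (q := q) b
    set A := Z N q b * Zs N q b with hA
    set B := Zs N q b * Z N q b with hB
    set S := ∑ k ∈ Finset.univ.filter (fun k => b < k), Z N q k * Zs N q k with hS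
    have h4 : ((qc q)⁻¹ * Qc q) • S = B - A := by
      linear_combination (norm := module) h
    have h5 : (∑ k ∈ Finset.univ.filter (fun k => b < k), Qc q • (Z N q k * Zs N q k))
        = qc q • B - qc q • A := by
      rw [← Finset.smul_sum, ← hS]
      have : Qc q • S = (qc q * ((qc q)⁻¹ * Qc q)) • S := by
        rw [← mul_assoc, mul_inv_cancel₀ (qcne hq0), one_mul]
      rw [this, mul_smul, h4, smul_sub]
    rw [h5]
    abel
  · have hRm : ∀ i a : Fin N, Rm q m i b a • (Z N q i * Zs N q a)
        = (if a = m then (if i = b then (Z N q b * Zs N q m) else 0) else 0) := by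
      intro i a
      by_cases ha : a = m
      · by_cases hi : i = b
        · have hmi : m ≠ i := fun h => hbm ((h.trans hi).symm)
          have hv : Rm q m i b a = 1 := by
            unfold Rm; rw [if_pos ⟨ha.symm, hi, hmi⟩]
          rw [hv, one_smul, if_pos ha, if_pos hi, hi, ha]
        · have hv : Rm q m i b a = 0 := by
            unfold Rm
            rw [if_neg (fun h => hi h.2.1), if_neg (fun h => hi h.2.1),
              if_neg (fun h => hbm h.1.symm)]
          rw [hv, zero_smul, if_pos ha, if_neg hi]
      · have hv : Rm q m i b a = 0 := by
          unfold Rm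
          rw [if_neg (fun h => ha h.1.symm), if_neg (fun h => hbm ((h.1.trans h.2.1).symm)),
            if_neg (fun h => hbm h.1.symm)]
        rw [hv, zero_smul, if_neg ha]
    simp only [hRm, Finset.sum_ite_eq', Finset.mem_univ, if_true]
    exact X_zs hbm

end QSphere

open QSphere in
/-- the calculus `Γ̃_λ` is inner with `θ = (q⁻²λ - 1)⁻¹ θ₊`. -/
theorem stmt14 (N : ℕ) (hN : 2 ≤ N) (q : ℝ) (hq : q ≠ -1 ∧ q ≠ 0 ∧ q ≠ 1)
    (lam : ℂ) (hlam : lam ≠ 0 ∧ lam ≠ qc q ^ 2)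
    (D : PreCalc N q) (hD : D.IsFODC) (hRel : D.RelHolds lam) (hEq : D.EqTl lam) :
    D.Inner (D.smulG (qc q ^ (-2:ℤ) * lam - 1)⁻¹ D.thP) := by
  obtain ⟨hqm1, hq0, hq1⟩ := hq
  obtain ⟨hl0, hlq⟩ := hlam
  obtain ⟨lA, lAx, lmul, lone, lsmulx, lsmulw, rA, rAx, rmul, rone, rsmulw, rsmulx,
    compat, dadd, dsmul, dleib⟩ := hD
  have hqc : qc q ≠ 0 := qcne hq0
  -- additivity over finite sums and subtraction
  have ract_sum : ∀ (x : X N q) (s : Finset (Fin N)) (f : Fin N → D.Γ),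
      D.ract (∑ i ∈ s, f i) x = ∑ i ∈ s, D.ract (f i) x :=
    fun x s f => map_sum (AddMonoidHom.mk' (fun ω => D.ract ω x) (fun a b => rA a b x)) f s
  have lact_sum : ∀ (x : X N q) (s : Finset (Fin N)) (f : Fin N → D.Γ),
      D.lact x (∑ i ∈ s, f i) = ∑ i ∈ s, D.lact x (f i) :=
    fun x s f => map_sum (AddMonoidHom.mk' (D.lact x) (lA x)) f s
  have lactx_sum : ∀ (ω : D.Γ) (s : Finset (Fin N)) (g : Fin N → X N q),
      D.lact (∑ i ∈ s, g i) ω = ∑ i ∈ s, D.lact (g i) ω :=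
    fun ω s g => map_sum (AddMonoidHom.mk' (fun y => D.lact y ω) (fun a b => lAx a b ω)) g s
  have lsub : ∀ (x : X N q) (ω η : D.Γ), D.lact x (ω - η) = D.lact x ω - D.lact x η :=
    fun x ω η => map_sub (AddMonoidHom.mk' (D.lact x) (lA x)) ω η
  have rsub : ∀ (ω η : D.Γ) (x : X N q), D.ract (ω - η) x = D.ract ω x - D.ract η x :=
    fun ω η x => map_sub (AddMonoidHom.mk' (fun w => D.ract w x) (fun a b => rA a b x)) ω η
  have d1 : D.d 1 = 0 := by
    have h := dleib 1 1
    rw [mul_one, rone, lone] at h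
    exact (left_eq_add.mp h)
  have hc : qc q ^ (-2:ℤ) * lam - 1 ≠ 0 := by
    rw [sub_ne_zero]
    intro h
    apply hlq
    have h2 : qc q ^ (2:ℤ) * (qc q ^ (-2:ℤ) * lam) = qc q ^ (2:ℤ) * 1 := by rw [h]
    rw [← mul_assoc, ← zpow_add₀ hqc] at h2
    norm_num at h2
    exact h2
  -- T2 : sphere relation collapses the middle term
  have T2 : ∀ w : X N q, (∑ i, D.lact (Z N q i) (D.lact (Zs N q i) (D.d w))) = D.d w := by
    intro w
    have : ∀ i : Fin N, D.lact (Z N q i) (D.lact (Zs N q i) (D.d w))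
        = D.lact (Z N q i * Zs N q i) (D.d w) := fun i => (lmul _ _ _).symm
    rw [Finset.sum_congr rfl fun i _ => this i, ← lactx_sum, X_sphere, lone]
  -- T3 : sphere relation collapses the θ₊-terms
  have T3 : ∀ w : X N q, (∑ i, D.lact (Z N q i * (Zs N q i * w)) D.thP) = D.lact w D.thP := by
    intro w
    have : ∀ i : Fin N, D.lact (Z N q i * (Zs N q i * w)) D.thP
        = D.lact ((Z N q i * Zs N q i) * w) D.thP := fun i => by rw [mul_assoc]
    rw [Finset.sum_congr rfl fun i _ => this i, ← lactx_sum, ← Finset.sum_mul, X_sphere,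
      one_mul]
  -- T1 for z: the R-matrix term
  have T1z : ∀ m : Fin N, (∑ i, D.lact (Z N q i) (D.SRright i m))
      = qc q • D.lact (Z N q m) D.thP := by
    intro m
    calc (∑ i, D.lact (Z N q i) (D.SRright i m))
        = ∑ i, ∑ a, ∑ b, Rm q i a m b • D.lact (Z N q i * Z N q a) (D.dzs b) := by
          refine Finset.sum_congr rfl fun i _ => ?_
          rw [PreCalc.SRright, lact_sum]
          refine Finset.sum_congr rfl fun a _ => ?_
          rw [lact_sum]
          refine Finset.sum_congr rfl fun b _ => ?_
          rw [lsmulw, lmul]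
          rfl
      _ = ∑ b, ∑ i, ∑ a, Rm q i a m b • D.lact (Z N q i * Z N q a) (D.dzs b) := by
          exact (Finset.sum_congr rfl fun i _ => Finset.sum_comm).trans Finset.sum_comm
      _ = ∑ b, D.lact (qc q • (Z N q m * Z N q b)) (D.dzs b) := by
          refine Finset.sum_congr rfl fun b _ => ?_
          rw [← sumRm_zz (N := N) hq0 m b, lactx_sum]
          refine Finset.sum_congr rfl fun i _ => ?_
          rw [lactx_sum]
          exact Finset.sum_congr rfl fun a _ => (lsmulx _ _ _).symm
      _ = qc q • D.lact (Z N q m) D.thP := by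
          rw [PreCalc.thP, lact_sum, Finset.smul_sum]
          refine Finset.sum_congr rfl fun b _ => ?_
          rw [lsmulx, lmul]
  -- T1 for z*: the R-matrix term
  have T1zs : ∀ m : Fin N, (∑ i, D.lact (Z N q i) (D.SRbar i m))
      = qc q • D.lact (Zs N q m) D.thP := by
    intro m
    calc (∑ i, D.lact (Z N q i) (D.SRbar i m))
        = ∑ i, ∑ a, ∑ b, Rm q m i b a • D.lact (Z N q i * Zs N q a) (D.dzs b) := by
          refine Finset.sum_congr rfl fun i _ => ?_
          rw [PreCalc.SRbar, lact_sum]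
          refine Finset.sum_congr rfl fun a _ => ?_
          rw [lact_sum]
          refine Finset.sum_congr rfl fun b _ => ?_
          rw [lsmulw, lmul]
          rfl
      _ = ∑ b, ∑ i, ∑ a, Rm q m i b a • D.lact (Z N q i * Zs N q a) (D.dzs b) := by
          exact (Finset.sum_congr rfl fun i _ => Finset.sum_comm).trans Finset.sum_comm
      _ = ∑ b, D.lact (qc q • (Zs N q m * Z N q b)) (D.dzs b) := by
          refine Finset.sum_congr rfl fun b _ => ?_
          rw [← sumRm_zzs (N := N) hq0 m b, lactx_sum]
          refine Finset.sum_congr rfl fun i _ => ?_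
          rw [lactx_sum]
          exact Finset.sum_congr rfl fun a _ => (lsmulx _ _ _).symm
      _ = qc q • D.lact (Zs N q m) D.thP := by
          rw [PreCalc.thP, lact_sum, Finset.smul_sum]
          refine Finset.sum_congr rfl fun b _ => ?_
          rw [lsmulx, lmul]
  -- key computation for z
  have key_z : ∀ m : Fin N, D.ract D.thP (Z N q m)
      = D.lact (Z N q m) D.thP + (qc q ^ (-2:ℤ) * lam - 1) • D.d (Z N q m) := by
    intro m
    calc D.ract D.thP (Z N q m)
        = ∑ i, D.lact (Z N q i) (D.ract (D.dzs i) (Z N q m)) := by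
          rw [PreCalc.thP, ract_sum]
          exact Finset.sum_congr rfl fun i _ => compat _ _ _
      _ = ∑ i, ((qc q * lam⁻¹) • D.lact (Z N q i) (D.SRright i m)
            + (qc q ^ (-2:ℤ) * lam - 1) • D.lact (Z N q i) (D.lzsdz i m)
            - (qc q ^ 2 * lam⁻¹ - 1) • D.lact (Z N q i) (D.zszP i m)) := by
          refine Finset.sum_congr rfl fun i _ => ?_
          rw [(hEq i m).2.2.2, lsub, lA, lsmulw, lsmulw, lsmulw]
      _ = (qc q * lam⁻¹) • (∑ i, D.lact (Z N q i) (D.SRright i m))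
            + (qc q ^ (-2:ℤ) * lam - 1) • (∑ i, D.lact (Z N q i) (D.lzsdz i m))
            - (qc q ^ 2 * lam⁻¹ - 1) • (∑ i, D.lact (Z N q i) (D.zszP i m)) := by
          rw [Finset.sum_sub_distrib, Finset.sum_add_distrib, Finset.smul_sum,
            Finset.smul_sum, Finset.smul_sum]
      _ = D.lact (Z N q m) D.thP + (qc q ^ (-2:ℤ) * lam - 1) • D.d (Z N q m) := by
          have h2 : (∑ i, D.lact (Z N q i) (D.lzsdz i m)) = D.d (Z N q m) := T2 (Z N q m)
          have h3 : (∑ i, D.lact (Z N q i) (D.zszP i m)) = D.lact (Z N q m) D.thP := by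
            have : ∀ i : Fin N, D.lact (Z N q i) (D.zszP i m)
                = D.lact (Z N q i * (Zs N q i * Z N q m)) D.thP := by
              intro i
              rw [PreCalc.zszP, ← lmul]
            rw [Finset.sum_congr rfl fun i _ => this i, T3]
          rw [T1z m, h2, h3]
          match_scalars <;> ring
  -- key computation for z*
  have key_zs : ∀ m : Fin N, D.ract D.thP (Zs N q m)
      = D.lact (Zs N q m) D.thP + (qc q ^ (-2:ℤ) * lam - 1) • D.d (Zs N q m) := by
    intro m
    calc D.ract D.thP (Zs N q m)
        = ∑ i, D.lact (Z N q i) (D.ract (D.dzs i) (Zs N q m)) := by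
          rw [PreCalc.thP, ract_sum]
          exact Finset.sum_congr rfl fun i _ => compat _ _ _
      _ = ∑ i, (((qc q)⁻¹ * lam) • D.lact (Z N q i) (D.SRbar i m)
            + (qc q ^ (-2:ℤ) * lam - 1) • D.lact (Z N q i) (D.lzsdzs i m)
            - (lam - 1) • D.lact (Z N q i) (D.zszsP i m)) := by
          refine Finset.sum_congr rfl fun i _ => ?_
          rw [(hEq i m).2.1, lsub, lA, lsmulw, lsmulw, lsmulw]
      _ = ((qc q)⁻¹ * lam) • (∑ i, D.lact (Z N q i) (D.SRbar i m))
            + (qc q ^ (-2:ℤ) * lam - 1) • (∑ i, D.lact (Z N q i) (D.lzsdzs i m))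
            - (lam - 1) • (∑ i, D.lact (Z N q i) (D.zszsP i m)) := by
          rw [Finset.sum_sub_distrib, Finset.sum_add_distrib, Finset.smul_sum,
            Finset.smul_sum, Finset.smul_sum]
      _ = D.lact (Zs N q m) D.thP + (qc q ^ (-2:ℤ) * lam - 1) • D.d (Zs N q m) := by
          have h2 : (∑ i, D.lact (Z N q i) (D.lzsdzs i m)) = D.d (Zs N q m) := T2 (Zs N q m)
          have h3 : (∑ i, D.lact (Z N q i) (D.zszsP i m)) = D.lact (Zs N q m) D.thP := by
            have : ∀ i : Fin N, D.lact (Z N q i) (D.zszsP i m)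
                = D.lact (Z N q i * (Zs N q i * Zs N q m)) D.thP := by
              intro i
              rw [PreCalc.zszsP, ← lmul]
            rw [Finset.sum_congr rfl fun i _ => this i, T3]
          rw [T1zs m, h2, h3]
          match_scalars
          · field_simp
            ring
          · ring
  -- the generating one-form
  set c : ℂ := (qc q ^ (-2:ℤ) * lam - 1)⁻¹ with hcdef
  have gen_z : ∀ m : Fin N, D.d (Z N q m)
      = D.ract (c • D.thP) (Z N q m) - D.lact (Z N q m) (c • D.thP) := by
    intro m
    rw [rsmulw, key_z m, lsmulw, smul_add, smul_smul, inv_mul_cancel₀ hc, one_smul]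
    abel
  have gen_zs : ∀ m : Fin N, D.d (Zs N q m)
      = D.ract (c • D.thP) (Zs N q m) - D.lact (Zs N q m) (c • D.thP) := by
    intro m
    rw [rsmulw, key_zs m, lsmulw, smul_add, smul_smul, inv_mul_cancel₀ hc, one_smul]
    abel
  -- conclude by induction over the algebra
  intro x
  obtain ⟨y, rfl⟩ := RingQuot.mkAlgHom_surjective ℂ (SphereRel N q) x
  show D.d _ = D.ract (c • D.thP) _ - D.lact _ (c • D.thP)
  induction y using FreeAlgebra.induction with
  | grade0 r =>
      rw [AlgHom.commutes, Algebra.algebraMap_eq_smul_one, dsmul, d1, smul_zero,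
        rsmulx, lsmulx, rone, lone, sub_self]
  | grade1 g =>
      cases g with
      | inl i => exact gen_z i
      | inr i => exact gen_zs i
  | mul a b iha ihb =>
      rw [map_mul, dleib, iha, ihb, rsub, lsub, ← rmul, compat, lmul]
      abel
  | add a b iha ihb =>
      rw [map_add, dadd, iha, ihb, rAx, lAx]
      abel
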